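/- For all ε > 0, n > 0 and natural k with 2k ≤ ε²n, the Gaussian tail moment satisfies √(n/(2π)) (∫_{−∞}^{−ε} + ∫_{ε}^{∞}) e^{−n x²/2} x^{2k} dx ≤ e^{−n ε²/2} ε^{2k}. -/

import Mathlib

open MeasureTheory Set Real

/-- Translation of a set integral on `Ioi`. -/
lemma shift_Ioi (a : ℝ) (f : ℝ → ℝ) :
    (∫ x in Set.Ioi a, f (x - a)) = ∫ x in Set.Ioi (0 : ℝ), f x := by
  have A : MeasurableEmbedding (fun x : ℝ => x - a) :=
    (Homeomorph.subRight a).isClosedEmbedding.measurableEmbedding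
  have h := (measurePreserving_sub_right (volume : Measure ℝ) a).setIntegral_preimage_emb
    A f (Set.Ioi 0)
  have hpre : (fun x : ℝ => x - a) ⁻¹' Set.Ioi (0 : ℝ) = Set.Ioi a := by
    ext x; simp [sub_pos]
  rwa [hpre] at h

/-- Gaussian tail moment bound: for `ε > 0`, `n > 0` and `2k ≤ ε²n`,
`√(n/(2π)) (∫_{−∞}^{−ε} + ∫_{ε}^{∞}) e^{−n x²/2} x^{2k} dx ≤ e^{−n ε²/2} ε^{2k}`. -/
theorem stmt_17 (ε n : ℝ) (hε : 0 < ε) (hn : 0 < n) (k : ℕ)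
    (hk : (2 * k : ℝ) ≤ ε ^ 2 * n) :
    Real.sqrt (n / (2 * Real.pi)) *
      ((∫ x in Set.Iic (-ε), Real.exp (-n * x ^ 2 / 2) * x ^ (2 * k)) +
        (∫ x in Set.Ici ε, Real.exp (-n * x ^ 2 / 2) * x ^ (2 * k))) ≤
      Real.exp (-n * ε ^ 2 / 2) * ε ^ (2 * k) := by
  set g : ℝ → ℝ := fun x => Real.exp (-n * x ^ 2 / 2) * x ^ (2 * k) with hg
  set C : ℝ := Real.exp (-n * ε ^ 2 / 2) * ε ^ (2 * k) with hC
  have hgeven : ∀ x : ℝ, g (-x) = g x := by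
    intro x
    simp only [hg, neg_sq, (even_two_mul k).neg_pow]
  -- reduce left integral to right one
  have hIic : (∫ x in Set.Iic (-ε), g x) = ∫ x in Set.Ioi ε, g x := by
    have h := integral_comp_neg_Iic (-ε) g
    rw [neg_neg] at h
    simp_rw [hgeven] at h
    exact h
  have hIci : (∫ x in Set.Ici ε, g x) = ∫ x in Set.Ioi ε, g x :=
    integral_Ici_eq_integral_Ioi
  -- integrability of g
  have hgint : Integrable g := by
    have h := integrable_rpow_mul_exp_neg_mul_sq (b := n / 2) (by positivity)
      (s := ((2 * k : ℕ) : ℝ)) (lt_of_lt_of_le neg_one_lt_zero (by positivity))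
    have heq : (fun x : ℝ => x ^ (((2 * k : ℕ) : ℝ)) * Real.exp (-(n / 2) * x ^ 2)) = g := by
      funext x
      rw [Real.rpow_natCast, show -(n / 2) * x ^ 2 = -n * x ^ 2 / 2 by ring]
      simp only [hg]; ring
    rwa [heq] at h
  -- the bounding function
  set h : ℝ → ℝ := fun x => C * Real.exp (-(n / 2) * (x - ε) ^ 2) with hh
  have hhint : Integrable h := by
    exact ((integrable_exp_neg_mul_sq (by positivity : (0:ℝ) < n / 2)).comp_sub_right
      ε).const_mul C
  -- pointwise bound on Ioi ε
  have hptwise : ∀ x ∈ Set.Ioi ε, g x ≤ h x := by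
    intro x hx
    have hxε : ε ≤ x := le_of_lt hx
    have hx0 : 0 < x := lt_of_lt_of_le hε hxε
    have key : x ^ (2 * k) ≤ ε ^ (2 * k) * Real.exp (n * ε * (x - ε)) := by
      have h1 : x / ε ≤ Real.exp ((x - ε) / ε) := by
        have := Real.add_one_le_exp ((x - ε) / ε)
        calc x / ε = (x - ε) / ε + 1 := by field_simp; ring
        _ ≤ Real.exp ((x - ε) / ε) := this
      have h2 : (x / ε) ^ (2 * k) ≤ Real.exp ((x - ε) / ε) ^ (2 * k) :=
        pow_le_pow_left₀ (by positivity) h1 _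
      have h3 : Real.exp ((x - ε) / ε) ^ (2 * k) = Real.exp ((2 * k : ℝ) * ((x - ε) / ε)) := by
        rw [← Real.exp_nat_mul]; push_cast; ring_nf
      have h4 : (2 * k : ℝ) * ((x - ε) / ε) ≤ n * ε * (x - ε) := by
        rw [div_eq_mul_inv]
        have hsub : (0:ℝ) ≤ x - ε := sub_nonneg.mpr hxε
        have : (2 * k : ℝ) * ε⁻¹ ≤ n * ε := by
          have h6 := mul_le_mul_of_nonneg_right hk (le_of_lt (inv_pos.mpr hε))
          calc (2 * k : ℝ) * ε⁻¹ ≤ ε ^ 2 * n * ε⁻¹ := h6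
          _ = n * ε := by field_simp
        calc (2 * k : ℝ) * ((x - ε) * ε⁻¹) = ((2 * k : ℝ) * ε⁻¹) * (x - ε) := by ring
        _ ≤ n * ε * (x - ε) := mul_le_mul_of_nonneg_right this hsub
      have h5 : (x / ε) ^ (2 * k) ≤ Real.exp (n * ε * (x - ε)) := by
        refine h2.trans ?_
        rw [h3]
        exact Real.exp_le_exp.mpr h4
      calc x ^ (2 * k) = ε ^ (2 * k) * (x / ε) ^ (2 * k) := by
            rw [div_pow]; field_simp
      _ ≤ ε ^ (2 * k) * Real.exp (n * ε * (x - ε)) :=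
          mul_le_mul_of_nonneg_left h5 (by positivity)
    have hexp : Real.exp (-n * x ^ 2 / 2) =
        Real.exp (-n * ε ^ 2 / 2) * Real.exp (-(n / 2) * (x - ε) ^ 2) *
          Real.exp (-(n * ε * (x - ε))) := by
      rw [← Real.exp_add, ← Real.exp_add]
      congr 1
      ring
    simp only [hg, hh, hC]
    rw [hexp]
    calc Real.exp (-n * ε ^ 2 / 2) * Real.exp (-(n / 2) * (x - ε) ^ 2) *
          Real.exp (-(n * ε * (x - ε))) * x ^ (2 * k)
        ≤ Real.exp (-n * ε ^ 2 / 2) * Real.exp (-(n / 2) * (x - ε) ^ 2) *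
          Real.exp (-(n * ε * (x - ε))) * (ε ^ (2 * k) * Real.exp (n * ε * (x - ε))) := by
          apply mul_le_mul_of_nonneg_left key (by positivity)
    _ = (Real.exp (-n * ε ^ 2 / 2) * ε ^ (2 * k) * Real.exp (-(n / 2) * (x - ε) ^ 2)) *
          (Real.exp (-(n * ε * (x - ε))) * Real.exp (n * ε * (x - ε))) := by ring
    _ = Real.exp (-n * ε ^ 2 / 2) * ε ^ (2 * k) * Real.exp (-(n / 2) * (x - ε) ^ 2) := by
          rw [← Real.exp_add, neg_add_cancel, Real.exp_zero, mul_one]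
  -- integral comparison
  have hineq : (∫ x in Set.Ioi ε, g x) ≤ ∫ x in Set.Ioi ε, h x := by
    refine setIntegral_mono_on hgint.integrableOn hhint.integrableOn measurableSet_Ioi hptwise
  -- compute the bound integral
  have hcomp : (∫ x in Set.Ioi ε, h x) = C * (Real.sqrt (π / (n / 2)) / 2) := by
    simp only [hh]
    rw [MeasureTheory.integral_const_mul]
    congr 1
    exact (shift_Ioi ε (fun t => Real.exp (-(n / 2) * t ^ 2))).trans
      (integral_gaussian_Ioi (n / 2))
  -- assemble
  rw [hIic, hIci]
  have hCpos : 0 < C := by positivity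
  have hs : Real.sqrt (n / (2 * π)) * Real.sqrt (π / (n / 2)) = Real.sqrt 1 := by
    rw [← Real.sqrt_mul (by positivity)]
    congr 1
    field_simp
  have hfin : Real.sqrt (n / (2 * π)) * (2 * (C * (Real.sqrt (π / (n / 2)) / 2))) = C := by
    have : Real.sqrt (n / (2 * π)) * Real.sqrt (π / (n / 2)) = 1 := by
      rw [hs, Real.sqrt_one]
    calc Real.sqrt (n / (2 * π)) * (2 * (C * (Real.sqrt (π / (n / 2)) / 2)))
        = (Real.sqrt (n / (2 * π)) * Real.sqrt (π / (n / 2))) * C := by ring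
    _ = C := by rw [this, one_mul]
  calc Real.sqrt (n / (2 * π)) * ((∫ x in Set.Ioi ε, g x) + ∫ x in Set.Ioi ε, g x)
      = Real.sqrt (n / (2 * π)) * (2 * ∫ x in Set.Ioi ε, g x) := by ring
  _ ≤ Real.sqrt (n / (2 * π)) * (2 * ∫ x in Set.Ioi ε, h x) := by
      apply mul_le_mul_of_nonneg_left (by linarith) (Real.sqrt_nonneg _)
  _ = Real.sqrt (n / (2 * π)) * (2 * (C * (Real.sqrt (π / (n / 2)) / 2))) := by rw [hcomp]
  _ = C := hfin
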